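/- Euler's recursion: for n ≥ 1, n·p(n) = ∑_{m=0}^{n−1} σ(n−m)·p(m), where p is the partition function with p(0) = 1 and σ(m) is the sum of the positive divisors of m. -/

import Mathlib

open Finset

/-- **Euler's recursion** for the partition function: for `n ≥ 1`,
`n · p(n) = ∑_{m=0}^{n-1} σ(n-m) · p(m)`, where `p(n)` is the number of integer partitions
of `n` (with `p(0) = 1`) and `σ(m) = ∑_{d ∣ m} d` is the sum-of-divisors function. -/
lemma msum_le {s t : Multiset ℕ} (h : s ≤ t) : s.sum ≤ t.sum := by
  have h3 := congrArg Multiset.sum (tsub_add_cancel_of_le h)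
  rw [Multiset.sum_add] at h3
  omega

def removeEquiv (n d j : ℕ) (hd : 0 < d) (h : d * j ≤ n) :
    {P : Nat.Partition n // Multiset.replicate j d ≤ P.parts} ≃ Nat.Partition (n - d * j) where
  toFun P := ⟨P.1.parts - Multiset.replicate j d,
    fun hi => P.1.parts_pos (Multiset.mem_of_le (Multiset.sub_le_self _ _) hi),
    by
      have h2 := P.2
      have h3 : (P.1.parts - Multiset.replicate j d) + Multiset.replicate j d = P.1.parts :=
        tsub_add_cancel_of_le h2
      have := congrArg Multiset.sum h3
      rw [Multiset.sum_add, P.1.parts_sum, Multiset.sum_replicate, smul_eq_mul,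
        mul_comm j d] at this
      omega⟩
  invFun Q := ⟨⟨Q.parts + Multiset.replicate j d,
    fun hi => by
      rcases Multiset.mem_add.1 hi with h' | h'
      · exact Q.parts_pos h'
      · rw [Multiset.eq_of_mem_replicate h']; exact hd
    , by
      rw [Multiset.sum_add, Q.parts_sum, Multiset.sum_replicate, smul_eq_mul, mul_comm j d]
      omega⟩, Multiset.le_add_left _ _⟩
  left_inv P := by
    ext1; ext1; simp [tsub_add_cancel_of_le P.2]
  right_inv Q := by
    ext1; simp

theorem euler_partition_recursion (n : ℕ) (hn : 1 ≤ n) :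
    n * Fintype.card (Nat.Partition n)
      = ∑ m ∈ Finset.range n,
          (∑ d ∈ (n - m).divisors, d) * Fintype.card (Nat.Partition m) := by
  classical
  -- each part-count times part-size is at most n
  have hcount : ∀ (P : Nat.Partition n) (d : ℕ), P.parts.count d * d ≤ n := by
    intro P d
    have h1 : Multiset.replicate (P.parts.count d) d ≤ P.parts :=
      Multiset.le_count_iff_replicate_le.mp le_rfl
    have h2 := msum_le h1
    rw [Multiset.sum_replicate, smul_eq_mul, P.parts_sum] at h2
    omega
  -- Step A : inner double sum equals n for every partition
  have hA : ∀ P : Nat.Partition n,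
      ∑ d ∈ range (n+1), ∑ j ∈ Icc 1 n,
        (if Multiset.replicate j d ≤ P.parts then d else 0) = n := by
    intro P
    have step : ∀ d ∈ range (n+1),
        (∑ j ∈ Icc 1 n, if Multiset.replicate j d ≤ P.parts then d else 0)
          = P.parts.count d * d := by
      intro d _
      have hcn : P.parts.count d ≤ n := by
        rcases Nat.eq_zero_or_pos d with rfl | hd
        · have : (0:ℕ) ∉ P.parts := fun h => lt_irrefl 0 (P.parts_pos h)
          simp [Multiset.count_eq_zero_of_notMem this]
        · have := hcount P d
          calc P.parts.count d ≤ P.parts.count d * d := Nat.le_mul_of_pos_right _ hd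
            _ ≤ n := this
      calc (∑ j ∈ Icc 1 n, if Multiset.replicate j d ≤ P.parts then d else 0)
          = ∑ j ∈ Icc 1 n, if j ≤ P.parts.count d then d else 0 :=
            Finset.sum_congr rfl fun j _ =>
              if_congr Multiset.le_count_iff_replicate_le.symm rfl rfl
        _ = ∑ j ∈ (Icc 1 n).filter (· ≤ P.parts.count d), d := (Finset.sum_filter _ _).symm
        _ = ((Icc 1 n).filter (· ≤ P.parts.count d)).card * d := by
            rw [Finset.sum_const, smul_eq_mul]
        _ = P.parts.count d * d := by
            congr 1
            have : (Icc 1 n).filter (· ≤ P.parts.count d) = Icc 1 (P.parts.count d) := by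
              ext j; simp only [mem_filter, mem_Icc]; omega
            rw [this, Nat.card_Icc]
            omega
    rw [Finset.sum_congr rfl step]
    have hsub : P.parts.toFinset ⊆ range (n+1) := by
      intro d hd
      rw [Multiset.mem_toFinset] at hd
      have : d ≤ P.parts.sum :=
        Multiset.single_le_sum (fun x _ => Nat.zero_le x) _ hd
      rw [P.parts_sum] at this
      exact mem_range.mpr (Nat.lt_succ_of_le this)
    have hrec := Finset.sum_multiset_count_of_subset P.parts (range (n+1)) hsub
    rw [P.parts_sum] at hrec
    conv_rhs => rw [hrec]
    exact Finset.sum_congr rfl fun d _ => by rw [smul_eq_mul, mul_comm]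
  -- Step B : LHS as triple sum
  have lhs_eq : n * Fintype.card (Nat.Partition n)
      = ∑ P : Nat.Partition n, ∑ d ∈ range (n+1), ∑ j ∈ Icc 1 n,
          (if Multiset.replicate j d ≤ P.parts then d else 0) := by
    rw [Finset.sum_congr rfl (fun P _ => hA P), Finset.sum_const, smul_eq_mul, mul_comm]
    rfl
  -- Step C : evaluate the inner sum over partitions
  have inner : ∀ d ∈ range (n+1), ∀ j ∈ Icc 1 n,
      (∑ P : Nat.Partition n, if Multiset.replicate j d ≤ P.parts then d else 0)
        = if 1 ≤ d ∧ d * j ≤ n then d * Fintype.card (Nat.Partition (n - d * j)) else 0 := by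
    intro d _ j hj
    rw [mem_Icc] at hj
    rw [← Finset.sum_filter (fun P : Nat.Partition n => Multiset.replicate j d ≤ P.parts)
      (fun _ => d), Finset.sum_const, smul_eq_mul]
    by_cases hcond : 1 ≤ d ∧ d * j ≤ n
    · rw [if_pos hcond]
      have : (Finset.univ.filter (fun P : Nat.Partition n =>
          Multiset.replicate j d ≤ P.parts)).card
          = Fintype.card {P : Nat.Partition n // Multiset.replicate j d ≤ P.parts} :=
        (Fintype.card_subtype _).symm
      rw [this, Fintype.card_congr (removeEquiv n d j hcond.1 hcond.2), mul_comm]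
    · rw [if_neg hcond]
      have : (Finset.univ.filter (fun P : Nat.Partition n =>
          Multiset.replicate j d ≤ P.parts)) = ∅ := by
        rw [Finset.filter_eq_empty_iff]
        intro P _
        intro hle
        have h2 := msum_le hle
        rw [Multiset.sum_replicate, smul_eq_mul, P.parts_sum, mul_comm j d] at h2
        rcases Nat.eq_zero_or_pos d with rfl | hd
        · -- d = 0 : then 0 ∈ parts
          have h0 : (0:ℕ) ∈ P.parts := by
            apply Multiset.mem_of_le hle
            exact Multiset.mem_replicate.mpr ⟨by omega, rfl⟩
          exact lt_irrefl 0 (P.parts_pos h0)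
        · exact hcond ⟨hd, h2⟩
      rw [this]
      simp
  rw [lhs_eq, Finset.sum_comm]
  have midC : ∀ d ∈ range (n+1),
      (∑ j ∈ Icc 1 n, ∑ P : Nat.Partition n,
        if Multiset.replicate j d ≤ P.parts then d else 0)
      = ∑ j ∈ Icc 1 n,
          if 1 ≤ d ∧ d * j ≤ n then d * Fintype.card (Nat.Partition (n - d * j)) else 0 := by
    intro d hd
    refine Finset.sum_congr rfl fun j hj => ?_
    exact inner d hd j hj
  have swap : (∑ d ∈ range (n+1), ∑ P : Nat.Partition n, ∑ j ∈ Icc 1 n,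
        if Multiset.replicate j d ≤ P.parts then d else 0)
      = ∑ d ∈ range (n+1), ∑ j ∈ Icc 1 n,
          if 1 ≤ d ∧ d * j ≤ n then d * Fintype.card (Nat.Partition (n - d * j)) else 0 := by
    refine Finset.sum_congr rfl fun d hd => ?_
    rw [Finset.sum_comm]
    exact midC d hd
  rw [swap]
  -- Step D : the middle expression as a sum over a filtered product
  rw [← Finset.sum_product']
  rw [← Finset.sum_filter (fun x : ℕ × ℕ => 1 ≤ x.1 ∧ x.1 * x.2 ≤ n)
      (fun x : ℕ × ℕ => x.1 * Fintype.card (Nat.Partition (n - x.1 * x.2)))]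
  -- Step E : RHS as a sum over the biUnion of divisorsAntidiagonals
  have hdisj : (↑(Icc 1 n) : Set ℕ).PairwiseDisjoint
      (fun k => Nat.divisorsAntidiagonal k) := by
    intro k hk l hl hkl
    simp only [Function.onFun]
    rw [Finset.disjoint_left]
    intro x hxk hxl
    rw [Nat.mem_divisorsAntidiagonal] at hxk hxl
    exact hkl (hxk.1.symm.trans hxl.1)
  have hunion : (Icc 1 n).biUnion (fun k => Nat.divisorsAntidiagonal k)
      = ((range (n+1)) ×ˢ (Icc 1 n)).filter (fun x : ℕ × ℕ => 1 ≤ x.1 ∧ x.1 * x.2 ≤ n) := by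
    ext x
    simp only [mem_biUnion, mem_Icc, Nat.mem_divisorsAntidiagonal, mem_filter, mem_product,
      mem_range]
    constructor
    · rintro ⟨k, ⟨hk1, hk2⟩, hx, -⟩
      have h1 : 1 ≤ x.1 := by
        rcases Nat.eq_zero_or_pos x.1 with h | h
        · rw [h] at hx; simp at hx; omega
        · exact h
      have h2 : 1 ≤ x.2 := by
        rcases Nat.eq_zero_or_pos x.2 with h | h
        · rw [h] at hx; simp at hx; omega
        · exact h
      have hx1 : x.1 ≤ x.1 * x.2 := Nat.le_mul_of_pos_right _ h2
      have hx2 : x.2 ≤ x.1 * x.2 := Nat.le_mul_of_pos_left _ h1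
      refine ⟨⟨by omega, by omega, by omega⟩, h1, by omega⟩
    · rintro ⟨⟨-, hj1, hj2⟩, hd1, hle⟩
      have hpos : 0 < x.1 * x.2 := Nat.mul_pos hd1 hj1
      exact ⟨x.1 * x.2, ⟨hpos, hle⟩, rfl, hpos.ne'⟩
  rw [← hunion, Finset.sum_biUnion hdisj]
  -- Step F : rewrite the RHS sum via m ↦ n - m and antidiagonal
  rw [show (∑ m ∈ Finset.range n,
        (∑ d ∈ (n - m).divisors, d) * Fintype.card (Nat.Partition m))
      = ∑ k ∈ Icc 1 n, (∑ d ∈ k.divisors, d) * Fintype.card (Nat.Partition (n - k)) from ?_]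
  · refine Finset.sum_congr rfl fun k hk => ?_
    rw [mem_Icc] at hk
    rw [← Nat.map_div_right_divisors, Finset.sum_map]
    rw [Finset.sum_mul]
    refine Finset.sum_congr rfl fun d hd => ?_
    rw [Nat.mem_divisors] at hd
    show d * Fintype.card (Nat.Partition (n - d * (k / d))) = _
    rw [Nat.mul_div_cancel' hd.1]
  · -- reindex m ↦ n - m
    refine Finset.sum_nbij' (fun m => n - m) (fun k => n - k) ?_ ?_ ?_ ?_ ?_
    · intro m hm; rw [mem_range] at hm; simp only [mem_Icc]; omega
    · intro k hk; rw [mem_Icc] at hk; simp only [mem_range]; omega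
    · intro m hm; rw [mem_range] at hm; omega
    · intro k hk; rw [mem_Icc] at hk; omega
    · intro m hm; rw [mem_range] at hm
      have hmm : n - (n - m) = m := by omega
      rw [hmm]
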